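/- Let h ≥ 2 and let α₁, …, α_h ∈ x·k[[x]]. In the formal power series ring k[[x, y₁, …, y_h]], set fᵢ = (yᵢ − αᵢ)^h for each i and ξ = ∏ᵢ (yᵢ − αᵢ). Then ξ^h = f₁⋯f_h lies in the h-th power of the ideal (f₁, …, f_h), so ξ is integral over (f₁, …, f_h), but ξ ∉ (f₁, …, f_h); hence the ideal (f₁, …, f_h)k[[x, y₁, …, y_h]] is not integrally closed. -/

import Mathlib

noncomputable section

/-- `r` is integral over the ideal `I`: it satisfies a monic equation
`r^n + a₁ r^(n-1) + ⋯ + aₙ = 0` with `aᵢ ∈ Iⁱ`. -/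
def IsIntegralOverIdeal {R : Type*} [CommRing R] (I : Ideal R) (r : R) : Prop :=
  ∃ n : ℕ, 0 < n ∧ ∃ a : ℕ → R, (∀ i ∈ Finset.Icc 1 n, a i ∈ I ^ i) ∧
    r ^ n + ∑ i ∈ Finset.Icc 1 n, a i * r ^ (n - i) = 0

/-- An ideal is integrally closed if every element integral over it belongs to it. -/
def IsIntegrallyClosedIdeal {R : Type*} [CommRing R] (I : Ideal R) : Prop :=
  ∀ r : R, IsIntegralOverIdeal I r → r ∈ I

section Aux

open MvPowerSeries Finsupp

variable {k : Type} [Field k] {h : ℕ}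

/-- Support/degree of coefficients of `X t - a` when `a` only involves variable 0. -/
lemma factor_coeff_aux {t : Fin (h+1)} (ht : t ≠ 0) {a : MvPowerSeries (Fin (h+1)) k}
    (ha : ∀ e : Fin (h+1) →₀ ℕ, MvPowerSeries.coeff e a ≠ 0 → ∃ n, 0 < n ∧ e = single 0 n)
    {r : Fin (h+1) →₀ ℕ} (hr : MvPowerSeries.coeff r (X t - a) ≠ 0) :
    (∀ j, j ≠ 0 → j ≠ t → r j = 0) ∧ 1 ≤ r 0 + r t := by
  classical
  rw [map_sub] at hr
  by_cases hx : r = single t 1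
  · subst hx
    constructor
    · intro j hj0 hjt; simp [single_apply, Ne.symm hjt]
    · simp
  · rw [MvPowerSeries.coeff_X, if_neg hx, zero_sub, neg_ne_zero] at hr
    obtain ⟨n, hn, rfl⟩ := ha r hr
    constructor
    · intro j hj0 hjt; simp [single_apply, Ne.symm hj0]
    · rw [single_eq_same]
      omega

lemma pow_coeff_aux {t : Fin (h+1)} (ht : t ≠ 0) {a : MvPowerSeries (Fin (h+1)) k}
    (ha : ∀ e : Fin (h+1) →₀ ℕ, MvPowerSeries.coeff e a ≠ 0 → ∃ n, 0 < n ∧ e = single 0 n)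
    (m : ℕ) :
    ∀ r : Fin (h+1) →₀ ℕ, MvPowerSeries.coeff r ((X t - a) ^ m) ≠ 0 →
      (∀ j, j ≠ 0 → j ≠ t → r j = 0) ∧ m ≤ r 0 + r t := by
  classical
  induction m with
  | zero =>
    intro r hr
    rw [pow_zero, MvPowerSeries.coeff_one] at hr
    split_ifs at hr with hr0
    · subst hr0; simp
    · exact absurd rfl hr
  | succ m ih =>
    intro r hr
    rw [pow_succ, MvPowerSeries.coeff_mul] at hr
    obtain ⟨b, hb, hbne⟩ := Finset.exists_ne_zero_of_sum_ne_zero hr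
    rw [Finset.HasAntidiagonal.mem_antidiagonal] at hb
    have h1 : MvPowerSeries.coeff b.1 ((X t - a) ^ m) ≠ 0 := left_ne_zero_of_mul hbne
    have h2 : MvPowerSeries.coeff b.2 (X t - a) ≠ 0 := right_ne_zero_of_mul hbne
    obtain ⟨hs1, hd1⟩ := ih b.1 h1
    obtain ⟨hs2, hd2⟩ := factor_coeff_aux ht ha h2
    subst hb
    constructor
    · intro j hj0 hjt
      simp [hs1 j hj0 hjt, hs2 j hj0 hjt]
    · have : (b.1 + b.2) 0 + (b.1 + b.2) t = (b.1 0 + b.1 t) + (b.2 0 + b.2 t) := by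
        simp; ring
      omega


lemma esum_apply_zero (s : Finset (Fin h)) :
    (∑ i ∈ s, single (i.succ : Fin (h+1)) 1) 0 = 0 := by
  classical
  rw [Finset.sum_apply']
  simp [single_apply, (Fin.succ_ne_zero _)]

lemma esum_apply_succ (i : Fin h) :
    (∑ j : Fin h, single (j.succ : Fin (h+1)) 1) i.succ = 1 := by
  classical
  rw [Finset.sum_apply']
  simp [single_apply, Fin.succ_inj]

lemma coeff_prod_one (α : Fin h → MvPowerSeries (Fin (h + 1)) k)
    (hα : ∀ (i : Fin h) (e : Fin (h + 1) →₀ ℕ),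
      MvPowerSeries.coeff e (α i) ≠ 0 → ∃ n : ℕ, 0 < n ∧ e = Finsupp.single 0 n)
    (s : Finset (Fin h)) :
    MvPowerSeries.coeff (∑ i ∈ s, single (i.succ : Fin (h+1)) 1)
      (∏ i ∈ s, (X i.succ - α i)) = 1 := by
  classical
  induction s using Finset.induction_on with
  | empty => simp
  | insert _ _ hj ih =>
    rename_i j s
    rw [Finset.prod_insert hj, Finset.sum_insert hj, MvPowerSeries.coeff_mul]
    set E := single (j.succ : Fin (h+1)) 1 + ∑ i ∈ s, single (i.succ : Fin (h+1)) 1 with hE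
    have hE0 : E 0 = 0 := by
      rw [hE, Finsupp.add_apply, esum_apply_zero, single_apply]
      simp [single_apply, Fin.succ_ne_zero j]
    rw [Finset.sum_eq_single_of_mem
      (⟨single (j.succ : Fin (h+1)) 1, ∑ i ∈ s, single (i.succ : Fin (h+1)) 1⟩ :
        (Fin (h+1) →₀ ℕ) × (Fin (h+1) →₀ ℕ))]
    · have hXc : MvPowerSeries.coeff (single (j.succ : Fin (h+1)) 1) (X j.succ - α j)
          = 1 := by
        rw [map_sub, MvPowerSeries.coeff_X, if_pos rfl]
        have : MvPowerSeries.coeff (single (j.succ : Fin (h+1)) 1) (α j) = 0 := by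
          by_contra hc
          obtain ⟨n, hn, heq⟩ := hα j _ hc
          have h2 : ((single (j.succ : Fin (h+1)) 1 : Fin (h+1) →₀ ℕ)) 0 = n := by
            rw [heq, single_eq_same]
          rw [single_apply] at h2
          simp [(Fin.succ_ne_zero j)] at h2
          omega
        rw [this, sub_zero]
      rw [hXc, one_mul, ih]
    · rw [Finset.HasAntidiagonal.mem_antidiagonal]
    · rintro ⟨p, q⟩ hmem hne
      rw [Finset.HasAntidiagonal.mem_antidiagonal] at hmem
      by_cases hp : p = single (j.succ : Fin (h+1)) 1
      · exfalso
        apply hne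
        subst hp
        have : q = ∑ i ∈ s, single (i.succ : Fin (h+1)) 1 := by
          have := hmem
          rw [hE] at this
          exact add_left_cancel this
        rw [this]
      · have : MvPowerSeries.coeff p (X (j.succ : Fin (h+1)) - α j) = 0 := by
          rw [map_sub, MvPowerSeries.coeff_X, if_neg hp]
          have hp0 : p 0 = 0 := by
            have : p 0 + q 0 = E 0 := by
              rw [← hmem]; simp
            omega
          have : MvPowerSeries.coeff p (α j) = 0 := by
            by_contra hc
            obtain ⟨n, hn, heq⟩ := hα j _ hc
            rw [heq, single_eq_same] at hp0
            omega
          rw [this, zero_sub, neg_zero]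
        rw [this, zero_mul]

end Aux

open MvPowerSeries in
/-- Let `h ≥ 2` and `α₁, …, α_h ∈ x·k[[x]]` inside
`k[[x, y₁, …, y_h]]` (here `x = X 0` and `yᵢ = X i.succ`, and each `αᵢ` is a power series
in `x` alone with zero constant term). With `fᵢ = (yᵢ - αᵢ)^h` and `ξ = ∏ᵢ (yᵢ - αᵢ)`, we
have `ξ^h = f₁⋯f_h ∈ (f₁, …, f_h)^h`, so `ξ` is integral over `(f₁, …, f_h)`, but
`ξ ∉ (f₁, …, f_h)`; hence `(f₁, …, f_h)` is not integrally closed. -/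
theorem product_power_ideal_not_integrally_closed
    (k : Type) [Field k] (h : ℕ) (hh : 2 ≤ h)
    (α : Fin h → MvPowerSeries (Fin (h + 1)) k)
    (hα : ∀ (i : Fin h) (e : Fin (h + 1) →₀ ℕ),
      MvPowerSeries.coeff e (α i) ≠ 0 → ∃ n : ℕ, 0 < n ∧ e = Finsupp.single 0 n) :
    (∏ i : Fin h, (MvPowerSeries.X i.succ - α i)) ^ h =
      ∏ i : Fin h, (MvPowerSeries.X i.succ - α i) ^ h ∧
    (∏ i : Fin h, (MvPowerSeries.X i.succ - α i) ^ h) ∈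
      (Ideal.span (Set.range fun i : Fin h => (MvPowerSeries.X i.succ - α i) ^ h)) ^ h ∧
    IsIntegralOverIdeal
      (Ideal.span (Set.range fun i : Fin h => (MvPowerSeries.X i.succ - α i) ^ h))
      (∏ i : Fin h, (MvPowerSeries.X i.succ - α i)) ∧
    (∏ i : Fin h, (MvPowerSeries.X i.succ - α i)) ∉
      Ideal.span (Set.range fun i : Fin h => (MvPowerSeries.X i.succ - α i) ^ h) ∧
    ¬ IsIntegrallyClosedIdeal
      (Ideal.span (Set.range fun i : Fin h => (MvPowerSeries.X i.succ - α i) ^ h)) := by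
  classical
  set I := Ideal.span (Set.range fun i : Fin h => (MvPowerSeries.X i.succ - α i) ^ h) with hI
  set ξ := ∏ i : Fin h, (MvPowerSeries.X i.succ - α i) with hξ
  set P := ∏ i : Fin h, (MvPowerSeries.X i.succ - α i) ^ h with hP
  have part1 : ξ ^ h = P := by
    rw [hξ, hP, ← Finset.prod_pow]
  have part2 : P ∈ I ^ h := by
    have hmem : P ∈ ∏ _i : Fin h, I :=
      Ideal.prod_mem_prod (fun i _ => Ideal.subset_span ⟨i, rfl⟩)
    simpa [Finset.prod_const, Finset.card_univ] using hmem
  have part3 : IsIntegralOverIdeal I ξ := by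
    refine ⟨h, by omega, fun i => if i = h then -P else 0, ?_, ?_⟩
    · intro i hi
      by_cases hih : i = h
      · subst hih; simpa using neg_mem part2
      · simp [hih]
    · rw [Finset.sum_eq_single_of_mem h (by simp; omega)]
      · simp [part1]
      · intro b _ hb
        simp [hb]
  have part4 : ξ ∉ I := by
    intro hmem
    set e : Fin (h+1) →₀ ℕ := ∑ i : Fin h, Finsupp.single (i.succ : Fin (h+1)) 1 with he
    have hcoeff1 : MvPowerSeries.coeff e ξ = 1 := coeff_prod_one α hα Finset.univ
    obtain ⟨c, hc⟩ := (Submodule.mem_span_range_iff_exists_fun (MvPowerSeries (Fin (h+1)) k)).mp hmem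
    have hcoeff0 : MvPowerSeries.coeff e ξ = 0 := by
      rw [← hc, map_sum]
      refine Finset.sum_eq_zero fun i _ => ?_
      rw [smul_eq_mul, MvPowerSeries.coeff_mul]
      refine Finset.sum_eq_zero fun b hb => ?_
      rw [Finset.HasAntidiagonal.mem_antidiagonal] at hb
      have hq : MvPowerSeries.coeff b.2 ((X (i.succ : Fin (h+1)) - α i) ^ h) = 0 := by
        by_contra hne
        obtain ⟨-, hdeg⟩ := pow_coeff_aux (Fin.succ_ne_zero i) (hα i) h b.2 hne
        have h0 : b.2 0 = 0 := by
          have : b.1 0 + b.2 0 = e 0 := by rw [← hb]; simp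
          rw [esum_apply_zero] at this
          omega
        have h1 : b.2 i.succ ≤ 1 := by
          have : b.1 i.succ + b.2 i.succ = e i.succ := by rw [← hb]; simp
          rw [he, esum_apply_succ] at this
          omega
        omega
      rw [hq, mul_zero]
    rw [hcoeff1] at hcoeff0
    exact one_ne_zero hcoeff0
  refine ⟨part1, part2, part3, part4, fun H => part4 (H ξ part3)⟩
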